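/- In R₂, every monomial v in s, t of length at least 3 has one of the block forms [[0, v₁₂],[0, v₂₂]] or [[v₁₁, 0],[v₂₁, 0]], where each nonzero block entry v_{ij} is itself a monomial in s, t of length strictly less than the length of v (contraction property). -/

import Mathlib

/-!
The tree-indexed vector space `V` over `ℚ` with basis the free monoid on two letters
(encoded as `List Bool`, with `false` the letter `0` and `true` the letter `1`).
The recursive matrices `s = [[0,0],[1,0]]` and `t = [[0,t],[0,s]]` of the ring `R₂`
act on the decomposition `V = ℚ·φ ⊕ 0V ⊕ 1V` by the block-matrix recursion.
-/

noncomputable section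

abbrev V : Type := List Bool →₀ ℚ

/-- Prefixing by a letter: the embedding `V → yV`. -/
def pre (b : Bool) : V →ₗ[ℚ] V := Finsupp.lmapDomain ℚ ℚ (List.cons b)

/-- Value of `s = [[0,0],[1,0]]` on a basis word. -/
def Sfun : List Bool → V
  | [] => 0
  | false :: u => Finsupp.single (true :: u) 1
  | true :: _ => 0

/-- Value of `t = [[0,t],[0,s]]` on a basis word, by recursion. -/
def Tfun : List Bool → V
  | [] => 0
  | false :: _ => 0
  | true :: u => pre false (Tfun u) + pre true (Sfun u)

/-- The generator `s` of `R₂`. -/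
def sR : Module.End ℚ V := Finsupp.linearCombination ℚ Sfun

/-- The generator `t` of `R₂`. -/
def tR : Module.End ℚ V := Finsupp.linearCombination ℚ Tfun

/-- The level-preserving operator with block form `[[e,0,0],[0,A,B],[0,C,D]]` on
`V = ℚ·φ ⊕ 0V ⊕ 1V`, written `e ⊕ [[A,B],[C,D]]`. -/
def blk (e : ℚ) (A B C D : Module.End ℚ V) : Module.End ℚ V :=
  Finsupp.linearCombination ℚ (fun w => match w with
    | [] => Finsupp.single ([] : List Bool) e
    | false :: u => pre false (A (Finsupp.single u 1)) + pre true (C (Finsupp.single u 1))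
    | true :: u => pre false (B (Finsupp.single u 1)) + pre true (D (Finsupp.single u 1)))

/-- The monomial in `s, t` given by a word (`false ↦ s`, `true ↦ t`). -/
def mono (w : List Bool) : Module.End ℚ V :=
  (w.map (fun b => if b then tR else sR)).prod

/-- The ring `R₂` generated by `s` and `t` (a non-unital subring of `End ℚ V`). -/
def R2 : NonUnitalSubring (Module.End ℚ V) := NonUnitalSubring.closure {sR, tR}

end

noncomputable section

/-- A block entry of a monomial of length `< n`: either zero or a monomial of
strictly smaller length. -/
def ShortEntry (n : ℕ) (x : Module.End ℚ V) : Prop :=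
  x = 0 ∨ ∃ u : List Bool, u ≠ [] ∧ u.length < n ∧ x = mono u


lemma single_eq_smul (a : List Bool) (c : ℚ) :
    (Finsupp.single a c : V) = c • Finsupp.single a 1 := by
  rw [Finsupp.smul_single, smul_eq_mul, mul_one]

lemma pre_single (b : Bool) (u : List Bool) (c : ℚ) :
    pre b (Finsupp.single u c) = Finsupp.single (b :: u) c := by
  simp [pre]

lemma blk_nil (e : ℚ) (A B C D : Module.End ℚ V) :
    blk e A B C D (Finsupp.single ([] : List Bool) 1) = Finsupp.single [] e := by
  simp [blk, Finsupp.linearCombination_single]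

lemma blk_false (e : ℚ) (A B C D : Module.End ℚ V) (u : List Bool) :
    blk e A B C D (Finsupp.single (false :: u) 1)
      = pre false (A (Finsupp.single u 1)) + pre true (C (Finsupp.single u 1)) := by
  simp [blk, Finsupp.linearCombination_single]

lemma blk_true (e : ℚ) (A B C D : Module.End ℚ V) (u : List Bool) :
    blk e A B C D (Finsupp.single (true :: u) 1)
      = pre false (B (Finsupp.single u 1)) + pre true (D (Finsupp.single u 1)) := by
  simp [blk, Finsupp.linearCombination_single]

lemma blk_pre_false (e : ℚ) (A B C D : Module.End ℚ V) (x : V) :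
    blk e A B C D (pre false x) = pre false (A x) + pre true (C x) := by
  induction x using Finsupp.induction_linear with
  | zero => simp
  | add f g hf hg => simp only [map_add, hf, hg]; abel
  | single a c =>
      rw [single_eq_smul]
      simp only [map_smul, smul_add]
      rw [pre_single, blk_false, smul_add]

lemma blk_pre_true (e : ℚ) (A B C D : Module.End ℚ V) (x : V) :
    blk e A B C D (pre true x) = pre false (B x) + pre true (D x) := by
  induction x using Finsupp.induction_linear with
  | zero => simp
  | add f g hf hg => simp only [map_add, hf, hg]; abel
  | single a c =>
      rw [single_eq_smul]
      simp only [map_smul, smul_add]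
      rw [pre_single, blk_true, smul_add]

lemma blk_mul (A B C D A' B' C' D' : Module.End ℚ V) :
    blk 0 A B C D * blk 0 A' B' C' D' =
      blk 0 (A*A'+B*C') (A*B'+B*D') (C*A'+D*C') (C*B'+D*D') := by
  apply Finsupp.lhom_ext
  intro a c
  rw [single_eq_smul, map_smul, map_smul]
  congr 1
  match a with
  | [] =>
      simp [Module.End.mul_apply, blk_nil, Finsupp.single_zero]
  | false :: u =>
      simp only [Module.End.mul_apply, blk_false, map_add, blk_pre_false, blk_pre_true,
        LinearMap.add_apply]
      abel
  | true :: u =>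
      simp only [Module.End.mul_apply, blk_true, map_add, blk_pre_false, blk_pre_true,
        LinearMap.add_apply]
      abel

lemma sR_single (u : List Bool) : sR (Finsupp.single u 1) = Sfun u := by
  simp [sR, Finsupp.linearCombination_single]

lemma tR_single (u : List Bool) : tR (Finsupp.single u 1) = Tfun u := by
  simp [tR, Finsupp.linearCombination_single]

lemma sR_eq : sR = blk 0 0 0 1 0 := by
  apply Finsupp.lhom_ext
  intro a c
  rw [single_eq_smul, map_smul, map_smul]
  congr 1
  match a with
  | [] => simp [sR_single, Sfun, blk_nil, Finsupp.single_zero]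
  | false :: u => simp [sR_single, Sfun, blk_false, pre_single]
  | true :: u => simp [sR_single, Sfun, blk_true]

lemma tR_eq : tR = blk 0 0 tR 0 sR := by
  apply Finsupp.lhom_ext
  intro a c
  rw [single_eq_smul, map_smul, map_smul]
  congr 1
  match a with
  | [] => simp [tR_single, Tfun, blk_nil, Finsupp.single_zero]
  | false :: u => simp [tR_single, Tfun, blk_false]
  | true :: u => simp [tR_single, Tfun, blk_true, sR_single]

lemma s_mul_s : sR * sR = 0 := by
  apply Finsupp.lhom_ext
  intro a c
  rw [single_eq_smul, map_smul, map_smul]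
  congr 1
  match a with
  | [] => simp [Module.End.mul_apply, sR_single, Sfun]
  | false :: u =>
      simp [Module.End.mul_apply, sR_single, Sfun]
  | true :: u => simp [Module.End.mul_apply, sR_single, Sfun]


lemma mono_cons (b : Bool) (w : List Bool) :
    mono (b :: w) = (if b then tR else sR) * mono w := by
  simp [mono]

lemma mono_t : mono [true] = tR := by simp [mono]
lemma mono_s : mono [false] = sR := by simp [mono]

lemma s_mul_blk (A B C D : Module.End ℚ V) :
    sR * blk 0 A B C D = blk 0 0 0 A B := by
  rw [sR_eq, blk_mul]
  simp only [zero_mul, mul_zero, one_mul, mul_one, add_zero, zero_add]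

lemma t_mul_blk (A B C D : Module.End ℚ V) :
    tR * blk 0 A B C D = blk 0 (tR * C) (tR * D) (sR * C) (sR * D) := by
  conv_lhs => rw [tR_eq]
  rw [blk_mul]
  simp only [zero_mul, mul_zero, one_mul, mul_one, add_zero, zero_add]

lemma short_zero (n : ℕ) : ShortEntry n (0 : Module.End ℚ V) := Or.inl rfl

lemma short_mono {n : ℕ} {u : List Bool} (h1 : u ≠ []) (h2 : u.length < n) :
    ShortEntry n (mono u) := Or.inr ⟨u, h1, h2, rfl⟩

lemma short_le {n m : ℕ} {x : Module.End ℚ V} (h : ShortEntry n x) (hnm : n ≤ m) :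
    ShortEntry m x := by
  rcases h with h | ⟨u, h1, h2, h3⟩
  · exact Or.inl h
  · exact Or.inr ⟨u, h1, lt_of_lt_of_le h2 hnm, h3⟩

lemma short_t_mul {n : ℕ} {x : Module.End ℚ V} (h : ShortEntry n x) :
    ShortEntry (n+1) (tR * x) := by
  rcases h with rfl | ⟨u, h1, h2, rfl⟩
  · exact Or.inl (mul_zero _)
  · exact Or.inr ⟨true :: u, by simp, by simpa using h2, by rw [mono_cons]; simp⟩

lemma short_s_mul {n : ℕ} {x : Module.End ℚ V} (h : ShortEntry n x) :
    ShortEntry (n+1) (sR * x) := by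
  rcases h with rfl | ⟨u, h1, h2, rfl⟩
  · exact Or.inl (mul_zero _)
  · exact Or.inr ⟨false :: u, by simp, by simpa using h2, by rw [mono_cons]; simp⟩

lemma key : ∀ w : List Bool, 2 ≤ w.length →
    ∃ A B C D : Module.End ℚ V, mono w = blk 0 A B C D ∧
      ((B = 0 ∧ D = 0) ∨ (A = 0 ∧ C = 0)) ∧
      ShortEntry w.length C ∧ ShortEntry w.length D ∧
      ShortEntry (w.length + 1) A ∧ ShortEntry (w.length + 1) B ∧
      (3 ≤ w.length → ShortEntry w.length A ∧ ShortEntry w.length B) := by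
  intro w
  induction w with
  | nil => intro h; simp at h
  | cons b w ih =>
    intro hlen
    rcases Nat.lt_or_ge w.length 2 with hw | hw
    · -- base case: w has length exactly 1
      have hw1 : w.length = 1 := by
        have : 1 ≤ w.length := by simpa using hlen
        omega
      obtain ⟨b', rfl⟩ := List.length_eq_one_iff.mp hw1
      cases b <;> cases b'
      · -- ss
        refine ⟨0, 0, 0, 0, ?_, Or.inl ⟨rfl, rfl⟩, short_zero _, short_zero _,
          short_zero _, short_zero _, fun h => by simp at h⟩
        rw [mono_cons, mono_s, if_neg (by simp)]
        nth_rewrite 2 [sR_eq]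
        rw [s_mul_blk]
      · -- st
        refine ⟨0, 0, 0, tR, ?_, Or.inr ⟨rfl, rfl⟩, short_zero _,
          Or.inr ⟨[true], by simp, by simp, mono_t.symm⟩, short_zero _, short_zero _,
          fun h => by simp at h⟩
        rw [mono_cons, mono_t, if_neg (by simp)]
        conv_lhs => rw [tR_eq]
        rw [s_mul_blk]
      · -- ts
        refine ⟨tR, 0, sR, 0, ?_, Or.inl ⟨rfl, rfl⟩,
          Or.inr ⟨[false], by simp, by simp, mono_s.symm⟩, short_zero _,
          Or.inr ⟨[true], by simp, by simp, mono_t.symm⟩, short_zero _,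
          fun h => by simp at h⟩
        rw [mono_cons, mono_s, if_pos rfl]
        conv_lhs => rw [sR_eq]
        rw [t_mul_blk]
        simp only [mul_zero, mul_one]
      · -- tt
        refine ⟨0, tR * sR, 0, 0, ?_, Or.inr ⟨rfl, rfl⟩, short_zero _, short_zero _,
          short_zero _,
          Or.inr ⟨[true, false], by simp, by simp, by rw [mono_cons, mono_s]; simp⟩,
          fun h => by simp at h⟩
        rw [mono_cons, mono_t, if_pos rfl]
        nth_rewrite 2 [tR_eq]
        rw [t_mul_blk]
        simp only [mul_zero, s_mul_s]
    · -- inductive step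
      obtain ⟨A, B, C, D, hEq, hOr, hC, hD, hA, hB, _⟩ := ih hw
      have hlc : (b :: w).length = w.length + 1 := rfl
      cases b
      · -- multiply by s on the left
        have hmul : mono (false :: w) = blk 0 0 0 A B := by
          rw [mono_cons, if_neg (by simp), hEq, s_mul_blk]
        rcases hOr with ⟨hB0, hD0⟩ | ⟨hA0, hC0⟩
        · exact ⟨0, 0, A, B, hmul, Or.inl ⟨rfl, hB0⟩, by rw [hlc]; exact hA,
            by rw [hlc, hB0]; exact short_zero _, short_zero _, short_zero _,
            fun _ => ⟨short_zero _, short_zero _⟩⟩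
        · exact ⟨0, 0, A, B, hmul, Or.inr ⟨rfl, hA0⟩, by rw [hlc]; exact hA,
            by rw [hlc]; exact hB, short_zero _, short_zero _,
            fun _ => ⟨short_zero _, short_zero _⟩⟩
      · -- multiply by t on the left
        have hmul : mono (true :: w) = blk 0 (tR * C) (tR * D) (sR * C) (sR * D) := by
          rw [mono_cons, if_pos rfl, hEq, t_mul_blk]
        have hC' := short_t_mul hC
        have hD' := short_t_mul hD
        have hsC := short_s_mul hC
        have hsD := short_s_mul hD
        refine ⟨tR * C, tR * D, sR * C, sR * D, hmul, ?_,
          by rw [hlc]; exact hsC, by rw [hlc]; exact hsD,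
          by rw [hlc]; exact short_le hC' (by omega),
          by rw [hlc]; exact short_le hD' (by omega),
          fun _ => ⟨by rw [hlc]; exact hC', by rw [hlc]; exact hD'⟩⟩
        rcases hOr with ⟨hB0, hD0⟩ | ⟨hA0, hC0⟩
        · exact Or.inl ⟨by rw [hD0, mul_zero], by rw [hD0, mul_zero]⟩
        · exact Or.inr ⟨by rw [hC0, mul_zero], by rw [hC0, mul_zero]⟩


/-- Contraction property: every monomial `v` in `s, t` of length at least `3` has one
of the block forms `[[0,v₁₂],[0,v₂₂]]` or `[[v₁₁,0],[v₂₁,0]]`, where each nonzero block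
entry is itself a monomial of length strictly less than the length of `v`. -/
theorem contraction_property (w : List Bool) (hw : 3 ≤ w.length) :
    (∃ v12 v22, ShortEntry w.length v12 ∧ ShortEntry w.length v22 ∧
        mono w = blk 0 0 v12 0 v22) ∨
    (∃ v11 v21, ShortEntry w.length v11 ∧ ShortEntry w.length v21 ∧
        mono w = blk 0 v11 0 v21 0) := by
  obtain ⟨A, B, C, D, hEq, hOr, hC, hD, _, _, h3⟩ := key w (by omega)
  obtain ⟨hA, hB⟩ := h3 hw
  rcases hOr with ⟨hB0, hD0⟩ | ⟨hA0, hC0⟩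
  · right
    exact ⟨A, C, hA, hC, by rw [hEq, hB0, hD0]⟩
  · left
    exact ⟨B, D, hB, hD, by rw [hEq, hA0, hC0]⟩

end
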